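/- If p is an odd prime and k is a positive integer, then Z(2·p^k) = p^k − 1 when p^k ≡ 1 (mod 4), and Z(2·p^k) = p^k when p^k ≡ 3 (mod 4). -/

import Mathlib

/-- The m-th triangular number. -/
def T (m : ℕ) : ℕ := m * (m + 1) / 2

/-- The pseudo-Smarandache function: the least positive m with n ∣ T m. -/
noncomputable def Z (n : ℕ) : ℕ := sInf {m : ℕ | 0 < m ∧ n ∣ T m}

lemma dvd_T_iff (q m : ℕ) : 2 * q ∣ T m ↔ 4 * q ∣ m * (m + 1) := by
  have h2 : 2 ∣ m * (m + 1) := (Nat.even_mul_succ_self m).two_dvd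
  rw [T, Nat.dvd_div_iff_mul_dvd h2, show 2 * (2 * q) = 4 * q from by ring]

theorem stmt_8 (p k : ℕ) (hp : p.Prime) (hodd : Odd p) (hk : 0 < k) :
    (p ^ k % 4 = 1 → Z (2 * p ^ k) = p ^ k - 1) ∧
    (p ^ k % 4 = 3 → Z (2 * p ^ k) = p ^ k) := by
  set q := p ^ k with hq
  have hq1 : 1 < q := Nat.one_lt_pow hk.ne' hp.one_lt
  have key : ∀ m, 0 < m → 2 * q ∣ T m → q ∣ m ∨ q ∣ m + 1 := by
    intro m hm h
    rw [dvd_T_iff] at h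
    have hq' : q ∣ m * (m + 1) := dvd_trans ⟨4, by ring⟩ h
    by_cases hpm : p ∣ m
    · left
      have hnd : ¬ p ∣ m + 1 := by
        intro hc
        have hd1 : p ∣ 1 := by simpa using Nat.dvd_sub hc hpm
        have := Nat.le_of_dvd one_pos hd1
        have := hp.one_lt
        omega
      have hcop : Nat.Coprime q (m + 1) :=
        Nat.Coprime.pow_left k ((Nat.Prime.coprime_iff_not_dvd hp).mpr hnd)
      exact hcop.dvd_of_dvd_mul_right hq'
    · right
      have hcop : Nat.Coprime q m :=
        Nat.Coprime.pow_left k ((Nat.Prime.coprime_iff_not_dvd hp).mpr hpm)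
      exact hcop.dvd_of_dvd_mul_left hq'
  constructor
  · intro h1
    have hmem : (q - 1) ∈ {m : ℕ | 0 < m ∧ 2 * q ∣ T (m)} := by
      refine ⟨by omega, ?_⟩
      rw [dvd_T_iff]
      obtain ⟨t, ht⟩ : 4 ∣ q - 1 := by omega
      have h1' : q - 1 + 1 = q := by omega
      rw [h1', ht]
      exact ⟨t, by ring⟩
    apply le_antisymm (Nat.sInf_le hmem)
    apply le_csInf ⟨q - 1, hmem⟩
    rintro m ⟨hm, hdvd⟩
    rcases key m hm hdvd with h | h
    · have := Nat.le_of_dvd hm h; omega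
    · have := Nat.le_of_dvd (by omega) h; omega
  · intro h3
    have hmem : q ∈ {m : ℕ | 0 < m ∧ 2 * q ∣ T (m)} := by
      refine ⟨by omega, ?_⟩
      rw [dvd_T_iff]
      obtain ⟨t, ht⟩ : 4 ∣ q + 1 := by omega
      rw [ht]
      exact ⟨t, by ring⟩
    apply le_antisymm (Nat.sInf_le hmem)
    apply le_csInf ⟨q, hmem⟩
    rintro m ⟨hm, hdvd⟩
    rcases key m hm hdvd with h | h
    · exact Nat.le_of_dvd hm h
    · obtain ⟨c, hc⟩ := h
      rcases Nat.lt_or_ge c 2 with hc2 | hc2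
      · interval_cases c
        · omega
        · -- m + 1 = q, show contradiction with q % 4 = 3
          have hmq : m + 1 = q := by omega
          have h4 : 4 * q ∣ m * (m + 1) := by rwa [dvd_T_iff] at hdvd
          rw [hmq] at h4
          have hm' : m = q - 1 := by omega
          have : q * 4 ∣ q * (q - 1) := by
            have : m * q = q * (q - 1) := by rw [hm']; ring
            rw [this] at h4
            exact (by rw [show q * 4 = 4 * q from by ring]; exact h4)
          have h4d : 4 ∣ q - 1 := (Nat.mul_dvd_mul_iff_left (by omega : 0 < q)).mp this
          omega
      · have : q * 2 ≤ q * c := Nat.mul_le_mul_left q hc2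
        omega
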